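/- Let P be a tree whose rank is an additively indecomposable ordinal, let Q be a subtree of P, and let A ⊆ λ(rank(P)) be such that ς_P(s,t) ∈ A for every (s,t) ∈ Λ_2(Q). If rank(P) = 1, then rank(Q) ≤ 1. If rank(P) = ω^{ω^{ε_0}}·…·ω^{ω^{ε_l}} with ε_0 ≥ … ≥ ε_l, then rank(Q) ≤ ω^{ω^{ε_0}·1_A(0)}·…·ω^{ω^{ε_l}·1_A(l)}. -/

import Mathlib

open Ordinal Set

universe u

/-- The set of maximal elements ("leaves") of `P`. -/
def treeLeaves {α : Type u} [PartialOrder α] (P : Set α) : Set α :=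
  {t ∈ P | ∀ s ∈ P, ¬ t < s}

/-- The derivative `P' = P \ Leaves P`. -/
def treeDeriv {α : Type u} [PartialOrder α] (P : Set α) : Set α :=
  P \ treeLeaves P

/-- The transfinite iterated derivative `P^ξ`. -/
noncomputable def derivIter {α : Type u} [PartialOrder α] (P : Set α) (ξ : Ordinal.{u}) :
    Set α :=
  Ordinal.limitRecOn ξ P (fun _ ih => treeDeriv ih)
    (fun o _ ih => ⋂ (ζ : Set.Iio o), ih ζ.1 ζ.2)

/-- `P` is a tree: every ancestor set is well-ordered (a well-founded chain). -/
def IsTree {α : Type u} [PartialOrder α] (P : Set α) : Prop :=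
  ∀ t ∈ P, IsChain (· ≤ ·) {s ∈ P | s ≤ t} ∧ {s ∈ P | s ≤ t}.WellFoundedOn (· < ·)

/-- `P` is well-founded: some transfinite derivative is empty. -/
def IsWFTree {α : Type u} [PartialOrder α] (P : Set α) : Prop :=
  ∃ ξ : Ordinal.{u}, derivIter P ξ = ∅

/-- The rank of a well-founded tree: the least `ξ` with `P^ξ = ∅`. -/
noncomputable def treeRank {α : Type u} [PartialOrder α] (P : Set α) : Ordinal.{u} :=
  sInf {ξ | derivIter P ξ = ∅}

/-- `τ_P(t)`: the largest ordinal `ξ` with `t ∈ P^ξ`. -/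
noncomputable def treeTau {α : Type u} [PartialOrder α] (P : Set α) (t : α) : Ordinal.{u} :=
  sSup {ξ | t ∈ derivIter P ξ}

/-- `τ_{P,β}(t)`: the largest ordinal `ξ` with `t ∈ P^{β·ξ}`. -/
noncomputable def treeTauMul {α : Type u} [PartialOrder α] (P : Set α) (β : Ordinal.{u})
    (t : α) : Ordinal.{u} :=
  sSup {ξ | t ∈ derivIter P (β * ξ)}

/-- `alpProd ε i = ω^{ω^{ε 0}} · ⋯ · ω^{ω^{ε i}}`. -/
noncomputable def alpProd (ε : ℕ → Ordinal.{u}) : ℕ → Ordinal.{u}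
  | 0 => omega0 ^ omega0 ^ ε 0
  | (i + 1) => alpProd ε i * omega0 ^ omega0 ^ ε (i + 1)

/-- The separation function `ς_P` of a tree whose rank has decomposition
`ω^{ω^{ε 0}} ⋯ ω^{ω^{ε l}}`: the least `i` such that `s, t` lie in the same block
`P^{α_i·δ} \ P^{α_i·(δ+1)}` for some ordinal `δ`. -/
noncomputable def sep {α : Type u} [PartialOrder α] (P : Set α) (ε : ℕ → Ordinal.{u})
    (s t : α) : ℕ :=
  sInf {i : ℕ | ∃ δ : Ordinal.{u},
    s ∈ derivIter P (alpProd ε i * δ) \ derivIter P (alpProd ε i * (δ + 1)) ∧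
    t ∈ derivIter P (alpProd ε i * δ) \ derivIter P (alpProd ε i * (δ + 1))}

/-- `indProd ε A l = ω^{ω^{ε 0}·1_A(0)} ⋯ ω^{ω^{ε l}·1_A(l)}`. -/
noncomputable def indProd (ε : ℕ → Ordinal.{u}) (A : Set ℕ) : ℕ → Ordinal.{u}
  | 0 => omega0 ^ (omega0 ^ ε 0 * A.indicator (fun _ => (1 : Ordinal.{u})) 0)
  | (i + 1) => indProd ε A i *
      omega0 ^ (omega0 ^ ε (i + 1) * A.indicator (fun _ => (1 : Ordinal.{u})) (i + 1))

/-- `sumPow ε i = ω^{ε 0} + ⋯ + ω^{ε (i-1)}` (the partial sums `γ_i`). -/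
noncomputable def sumPow (ε : ℕ → Ordinal.{u}) : ℕ → Ordinal.{u}
  | 0 => 0
  | (i + 1) => sumPow ε i + omega0 ^ ε i

/-- `indSum ε A i = Σ_{n < i} 1_A(n)·ω^{ε n}`. -/
noncomputable def indSum (ε : ℕ → Ordinal.{u}) (A : Set ℕ) : ℕ → Ordinal.{u}
  | 0 => 0
  | (i + 1) => indSum ε A i + A.indicator (fun _ => (1 : Ordinal.{u})) i * omega0 ^ ε i

section Basics
variable {α : Type u} [PartialOrder α] {P Q : Set α}

theorem derivIter_zero (P : Set α) : derivIter P 0 = P :=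
  Ordinal.limitRecOn_zero _ _ _

theorem derivIter_succ (P : Set α) (ξ : Ordinal.{u}) :
    derivIter P (ξ + 1) = treeDeriv (derivIter P ξ) := by
  rw [Ordinal.add_one_eq_succ]
  exact Ordinal.limitRecOn_succ _ _ _ _

theorem derivIter_limit (P : Set α) {o : Ordinal.{u}} (h : Order.IsSuccLimit o) :
    derivIter P o = ⋂ (ζ : Set.Iio o), derivIter P ζ.1 :=
  Ordinal.limitRecOn_limit _ _ _ _ h

theorem treeDeriv_subset (P : Set α) : treeDeriv P ⊆ P := diff_subset

theorem mem_treeDeriv_iff {t : α} : t ∈ treeDeriv P ↔ t ∈ P ∧ ∃ s ∈ P, t < s := by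
  simp only [treeDeriv, treeLeaves, mem_diff, mem_setOf_eq, not_and, not_forall]
  constructor
  · rintro ⟨ht, h⟩
    obtain ⟨s, hs, h2⟩ := h ht
    exact ⟨ht, s, hs, not_not.mp h2⟩
  · rintro ⟨ht, s, hs, hlt⟩
    exact ⟨ht, fun _ => ⟨s, hs, not_not.mpr hlt⟩⟩

theorem derivIter_anti (P : Set α) : ∀ {ξ η : Ordinal.{u}}, ξ ≤ η →
    derivIter P η ⊆ derivIter P ξ := by
  intro ξ η
  induction η using Ordinal.limitRecOn with
  | zero => intro h; rw [nonpos_iff_eq_zero.mp h]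
  | add_one o ih =>
    intro h
    rcases eq_or_lt_of_le h with h | h
    · rw [h]
    · rw [derivIter_succ]
      exact (treeDeriv_subset _).trans (ih (Order.lt_add_one_iff.mp h))
  | limit o ho ih =>
    intro h
    rcases eq_or_lt_of_le h with h | h
    · rw [h]
    · rw [derivIter_limit P ho]
      exact iInter_subset (fun ζ : Set.Iio o => derivIter P ζ.1) ⟨ξ, h⟩

theorem derivIter_subset (P : Set α) (ξ : Ordinal.{u}) : derivIter P ξ ⊆ P := by
  have := derivIter_anti P (zero_le (a := ξ))
  rwa [derivIter_zero] at this

theorem derivIter_mono (hQP : Q ⊆ P) : ∀ ξ : Ordinal.{u}, derivIter Q ξ ⊆ derivIter P ξ := by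
  intro ξ
  induction ξ using Ordinal.limitRecOn with
  | zero => rw [derivIter_zero, derivIter_zero]; exact hQP
  | add_one o ih =>
    rw [derivIter_succ, derivIter_succ]
    intro t ht
    rw [mem_treeDeriv_iff] at ht ⊢
    obtain ⟨ht, s, hs, hlt⟩ := ht
    exact ⟨ih ht, s, ih hs, hlt⟩
  | limit o ho ih =>
    rw [derivIter_limit Q ho, derivIter_limit P ho]
    exact iInter_mono fun ζ => ih ζ.1 ζ.2

theorem mem_derivIter_of_lt {s t : α} (hs : s ∈ P) :
    ∀ ξ : Ordinal.{u}, t ∈ derivIter P ξ → s < t → s ∈ derivIter P ξ := by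
  intro ξ
  induction ξ using Ordinal.limitRecOn with
  | zero => rw [derivIter_zero]; exact fun _ _ => hs
  | add_one o ih =>
    rw [derivIter_succ]
    intro ht hlt
    rw [mem_treeDeriv_iff] at ht ⊢
    obtain ⟨ht, u, hu, hltu⟩ := ht
    exact ⟨ih ht hlt, t, ht, hlt⟩
  | limit o ho ih =>
    rw [derivIter_limit P ho]
    intro ht hlt
    exact mem_iInter.mpr fun ζ => ih ζ.1 ζ.2 (mem_iInter.mp ht ζ) hlt

end Basics
section Tau
variable {α : Type u} [PartialOrder α] {P Q : Set α}

theorem derivIter_treeRank (hWF : IsWFTree P) : derivIter P (treeRank P) = ∅ :=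
  csInf_mem hWF

theorem lt_treeRank_of_mem (hWF : IsWFTree P) {t : α} {ξ : Ordinal.{u}}
    (ht : t ∈ derivIter P ξ) : ξ < treeRank P := by
  by_contra h
  have := derivIter_anti P (le_of_not_gt h) ht
  rw [derivIter_treeRank hWF] at this
  exact this

theorem tauSet_bddAbove (hWF : IsWFTree P) (t : α) :
    BddAbove {ξ : Ordinal.{u} | t ∈ derivIter P ξ} :=
  ⟨treeRank P, fun _ hξ => (lt_treeRank_of_mem hWF hξ).le⟩

theorem mem_derivIter_treeTau (hWF : IsWFTree P) {t : α} (ht : t ∈ P) :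
    t ∈ derivIter P (treeTau P t) := by
  have hne : {ξ : Ordinal.{u} | t ∈ derivIter P ξ}.Nonempty :=
    ⟨0, by rw [mem_setOf_eq, derivIter_zero]; exact ht⟩
  rcases Ordinal.zero_or_succ_or_isSuccLimit (treeTau P t) with h | ⟨c, h⟩ | h
  · rw [h, derivIter_zero]; exact ht
  · have hc : c < treeTau P t := by rw [← h]; exact Order.lt_succ c
    obtain ⟨x, hx, hcx⟩ := exists_lt_of_lt_csSup hne hc
    have : treeTau P t ≤ x := by rw [← h]; exact Order.succ_le_of_lt hcx
    exact derivIter_anti P this hx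
  · rw [derivIter_limit P h]
    refine mem_iInter.mpr fun ζ => ?_
    obtain ⟨x, hx, hcx⟩ := exists_lt_of_lt_csSup hne ζ.2
    exact derivIter_anti P hcx.le hx

theorem mem_derivIter_iff_le_treeTau (hWF : IsWFTree P) {t : α} (ht : t ∈ P)
    {ξ : Ordinal.{u}} : t ∈ derivIter P ξ ↔ ξ ≤ treeTau P t :=
  ⟨fun h => le_csSup (tauSet_bddAbove hWF t) h,
   fun h => derivIter_anti P h (mem_derivIter_treeTau hWF ht)⟩

theorem treeTau_lt_treeRank (hWF : IsWFTree P) {t : α} (ht : t ∈ P) :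
    treeTau P t < treeRank P :=
  lt_treeRank_of_mem hWF (mem_derivIter_treeTau hWF ht)

theorem treeTau_lt_of_lt (hWF : IsWFTree P) {s t : α} (hs : s ∈ P) (ht : t ∈ P)
    (hlt : s < t) : treeTau P t < treeTau P s := by
  have h1 : t ∈ derivIter P (treeTau P t) := mem_derivIter_treeTau hWF ht
  have h2 : s ∈ derivIter P (treeTau P t) := mem_derivIter_of_lt hs _ h1 hlt
  have h3 : s ∈ derivIter P (treeTau P t + 1) := by
    rw [derivIter_succ, mem_treeDeriv_iff]
    exact ⟨h2, t, h1, hlt⟩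
  have := (mem_derivIter_iff_le_treeTau hWF hs).mp h3
  exact lt_of_lt_of_le (Order.lt_succ _) (by rwa [Ordinal.add_one_eq_succ] at this)

end Tau
section Arith

theorem alpProd_ne_zero (ε : ℕ → Ordinal.{u}) : ∀ i, alpProd ε i ≠ 0 := by
  intro i
  induction i with
  | zero => exact Ordinal.opow_ne_zero _ Ordinal.omega0_ne_zero
  | succ i ih =>
    exact _root_.mul_ne_zero ih (Ordinal.opow_ne_zero _ Ordinal.omega0_ne_zero)

/-- Uniqueness of ordinal division. -/
theorem ord_div_eq {a b δ : Ordinal.{u}} (b0 : b ≠ 0) (h1 : b * δ ≤ a)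
    (h2 : a < b * (δ + 1)) : a / b = δ := by
  refine le_antisymm ?_ ?_
  · rw [Ordinal.div_le b0]
    rwa [Ordinal.add_one_eq_succ] at h2
  · exact (Ordinal.le_div b0).mpr h1

theorem ord_div_mono {a b c : Ordinal.{u}} (c0 : c ≠ 0) (h : a ≤ b) : a / c ≤ b / c := by
  rw [Ordinal.div_le c0]
  exact lt_of_le_of_lt h (Ordinal.lt_mul_succ_div b c0)

/-- `alpProd ε j` factors through `alpProd ε i` for `i ≤ j`. -/
theorem alpProd_factor (ε : ℕ → Ordinal.{u}) {i j : ℕ} (h : i ≤ j) :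
    ∃ c : Ordinal.{u}, c ≠ 0 ∧ alpProd ε j = alpProd ε i * c := by
  induction j with
  | zero =>
    refine ⟨1, one_ne_zero, ?_⟩
    rw [Nat.le_zero.mp h, mul_one]
  | succ j ih =>
    rcases Nat.lt_or_ge i (j+1) with h' | h'
    · obtain ⟨c, c0, hc⟩ := ih (Nat.lt_succ_iff.mp h')
      refine ⟨c * omega0 ^ omega0 ^ ε (j+1),
        _root_.mul_ne_zero c0 (Ordinal.opow_ne_zero _ Ordinal.omega0_ne_zero), ?_⟩
      show alpProd ε j * omega0 ^ omega0 ^ ε (j+1) = _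
      rw [hc, mul_assoc]
    · refine ⟨1, one_ne_zero, ?_⟩
      rw [le_antisymm h h', mul_one]

/-- Quotients transfer upwards: equality of `/ alpProd ε i` implies equality of
`/ alpProd ε j` for `i ≤ j`. -/
theorem quot_transfer {ε : ℕ → Ordinal.{u}} {i j : ℕ} (hij : i ≤ j) {a b : Ordinal.{u}}
    (h : a / alpProd ε i = b / alpProd ε i) : a / alpProd ε j = b / alpProd ε j := by
  obtain ⟨c, c0, hc⟩ := alpProd_factor ε hij
  have key : ∀ x : Ordinal.{u}, x / alpProd ε j = x / alpProd ε i / c := by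
    intro x
    have hi0 := alpProd_ne_zero ε i
    rw [hc]
    refine ord_div_eq (_root_.mul_ne_zero hi0 c0) ?_ ?_
    · calc alpProd ε i * c * (x / alpProd ε i / c)
          = alpProd ε i * (c * (x / alpProd ε i / c)) := by rw [mul_assoc]
        _ ≤ alpProd ε i * (x / alpProd ε i) :=
          mul_le_mul_right (Ordinal.mul_div_le _ _) _
        _ ≤ x := Ordinal.mul_div_le _ _
    · have h1 : x < alpProd ε i * (x / alpProd ε i + 1) := by
        rw [Ordinal.add_one_eq_succ]; exact Ordinal.lt_mul_succ_div x hi0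
      have h2 : x / alpProd ε i < c * (x / alpProd ε i / c + 1) := by
        rw [Ordinal.add_one_eq_succ]; exact Ordinal.lt_mul_succ_div _ c0
      calc x < alpProd ε i * (x / alpProd ε i + 1) := h1
        _ ≤ alpProd ε i * (c * (x / alpProd ε i / c + 1)) := by
            refine mul_le_mul_right ?_ _
            rw [Ordinal.add_one_eq_succ, Ordinal.add_one_eq_succ]
            exact Order.succ_le_of_lt h2
        _ = alpProd ε i * c * (x / alpProd ε i / c + 1) := by rw [mul_assoc]
  rw [key a, key b, h]

end Arith
section G

/-- The digit-compression function: `gFun ε A k ρ` re-reads the mixed-radix digits of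
`ρ` (base `ω^{ω^{ε j}}`), keeping those with index in `A` and zeroing the others. -/
noncomputable def gFun (ε : ℕ → Ordinal.{u}) (A : Set ℕ) : ℕ → Ordinal.{u} → Ordinal.{u}
  | 0, ρ => A.indicator (fun _ => (1 : Ordinal.{u})) 0 * ρ
  | (i+1), ρ => indProd ε A i *
      (A.indicator (fun _ => (1 : Ordinal.{u})) (i+1) * (ρ / alpProd ε i)) +
      gFun ε A i (ρ % alpProd ε i)

variable {ε : ℕ → Ordinal.{u}} {A : Set ℕ}

theorem alpProd_zero : alpProd ε 0 = omega0 ^ omega0 ^ ε 0 := rfl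
theorem alpProd_succ' (i : ℕ) :
    alpProd ε (i+1) = alpProd ε i * omega0 ^ omega0 ^ ε (i+1) := rfl
theorem indProd_zero :
    indProd ε A 0 = omega0 ^ (omega0 ^ ε 0 * A.indicator (fun _ => (1 : Ordinal.{u})) 0) := rfl
theorem indProd_succ' (i : ℕ) : indProd ε A (i+1) = indProd ε A i *
    omega0 ^ (omega0 ^ ε (i+1) * A.indicator (fun _ => (1 : Ordinal.{u})) (i+1)) := rfl
theorem gFun_zero (ρ : Ordinal.{u}) :
    gFun ε A 0 ρ = A.indicator (fun _ => (1 : Ordinal.{u})) 0 * ρ := rfl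
theorem gFun_succ' (i : ℕ) (ρ : Ordinal.{u}) : gFun ε A (i+1) ρ = indProd ε A i *
    (A.indicator (fun _ => (1 : Ordinal.{u})) (i+1) * (ρ / alpProd ε i)) +
    gFun ε A i (ρ % alpProd ε i) := rfl

theorem gBound : ∀ k, ∀ ρ : Ordinal.{u}, ρ < alpProd ε k → gFun ε A k ρ < indProd ε A k := by
  intro k
  induction k with
  | zero =>
    intro ρ hρ
    rw [gFun_zero, indProd_zero]
    by_cases h0 : 0 ∈ A
    · rw [Set.indicator_of_mem h0, one_mul, mul_one]
      rwa [alpProd_zero] at hρ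
    · rw [Set.indicator_of_notMem h0, zero_mul, mul_zero, Ordinal.opow_zero]
      exact zero_lt_one
  | succ k ih =>
    intro ρ hρ
    have hk0 := alpProd_ne_zero ε k
    have hq : ρ / alpProd ε k < omega0 ^ omega0 ^ ε (k+1) := by
      rw [Ordinal.div_lt hk0]
      rwa [alpProd_succ'] at hρ
    have hr : ρ % alpProd ε k < alpProd ε k := Ordinal.mod_lt ρ hk0
    have hg := ih _ hr
    rw [gFun_succ', indProd_succ']
    by_cases h : (k+1) ∈ A
    · rw [Set.indicator_of_mem h, one_mul, mul_one]
      calc indProd ε A k * (ρ / alpProd ε k) + gFun ε A k (ρ % alpProd ε k)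
          < indProd ε A k * (ρ / alpProd ε k) + indProd ε A k := add_lt_add_right hg _
        _ = indProd ε A k * (ρ / alpProd ε k + 1) := (mul_add_one _ _).symm
        _ ≤ indProd ε A k * (omega0 ^ omega0 ^ ε (k+1)) :=
            mul_le_mul_right (Order.add_one_le_iff.mpr hq) _
    · rw [Set.indicator_of_notMem h, zero_mul, mul_zero, mul_zero, Ordinal.opow_zero,
        mul_one, zero_add]
      exact hg

theorem gStrict {i : ℕ} (hiA : i ∈ A) :
    ∀ k, i ≤ k → ∀ ρ' ρ : Ordinal.{u}, ρ' < ρ →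
      ρ' / alpProd ε i = ρ / alpProd ε i →
      (i = 0 ∨ ρ' / alpProd ε (i-1) ≠ ρ / alpProd ε (i-1)) →
      gFun ε A k ρ' < gFun ε A k ρ := by
  intro k hik
  induction k, hik using Nat.le_induction with
  | base =>
    intro ρ' ρ hlt hqi hdisj
    match i, hiA, hqi, hdisj with
    | 0, hiA, hqi, hdisj =>
      rw [gFun_zero, gFun_zero, Set.indicator_of_mem hiA, one_mul, one_mul]
      exact hlt
    | (m+1), hiA, hqi, hdisj =>
      have hne : ρ' / alpProd ε m ≠ ρ / alpProd ε m := by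
        rcases hdisj with h | h
        · exact absurd h (Nat.succ_ne_zero m)
        · simpa using h
      have hm0 := alpProd_ne_zero ε m
      have hd : ρ' / alpProd ε m < ρ / alpProd ε m :=
        lt_of_le_of_ne (ord_div_mono hm0 hlt.le) hne
      rw [gFun_succ', gFun_succ', Set.indicator_of_mem hiA, one_mul, one_mul]
      have hb : gFun ε A m (ρ' % alpProd ε m) < indProd ε A m :=
        gBound m _ (Ordinal.mod_lt ρ' hm0)
      calc indProd ε A m * (ρ' / alpProd ε m) + gFun ε A m (ρ' % alpProd ε m)
          < indProd ε A m * (ρ' / alpProd ε m) + indProd ε A m := add_lt_add_right hb _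
        _ = indProd ε A m * (ρ' / alpProd ε m + 1) := (mul_add_one _ _).symm
        _ ≤ indProd ε A m * (ρ / alpProd ε m) :=
            mul_le_mul_right (Order.add_one_le_iff.mpr hd) _
        _ ≤ indProd ε A m * (ρ / alpProd ε m) + gFun ε A m (ρ % alpProd ε m) :=
            le_add_right le_rfl
  | succ k hik ih =>
    intro ρ' ρ hlt hqi hdisj
    have hk0 := alpProd_ne_zero ε k
    have key : ∀ j, j ≤ k → ∃ c : Ordinal.{u}, ∀ x : Ordinal.{u},
        x / alpProd ε j = c * (x / alpProd ε k) + (x % alpProd ε k) / alpProd ε j := by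
      intro j hj
      obtain ⟨c, c0, hc⟩ := alpProd_factor ε hj
      refine ⟨c, fun x => ?_⟩
      have e : x = alpProd ε j * (c * (x / alpProd ε k)) + x % alpProd ε k := by
        rw [← mul_assoc, ← hc, Ordinal.div_add_mod]
      conv_lhs => rw [e]
      rw [Ordinal.mul_add_div _ (alpProd_ne_zero ε j)]
    -- equal quotients at level k
    have hqq : ρ' / alpProd ε k = ρ / alpProd ε k := quot_transfer hik hqi
    have hrlt : ρ' % alpProd ε k < ρ % alpProd ε k := by
      have e1 := Ordinal.div_add_mod ρ (alpProd ε k)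
      have e2 := Ordinal.div_add_mod ρ' (alpProd ε k)
      rw [hqq] at e2
      rw [← e1, ← e2] at hlt
      exact (add_lt_add_iff_left _).mp hlt
    have hri : ρ' % alpProd ε k / alpProd ε i = ρ % alpProd ε k / alpProd ε i := by
      obtain ⟨c, hc⟩ := key i hik
      have h1 := hc ρ'
      rw [hqq, hqi, hc ρ] at h1
      exact ((add_right_inj _).mp h1).symm
    have hdisj' : i = 0 ∨ ρ' % alpProd ε k / alpProd ε (i-1) ≠
        ρ % alpProd ε k / alpProd ε (i-1) := by
      rcases hdisj with h | h
      · exact Or.inl h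
      · refine Or.inr fun heq => h ?_
        obtain ⟨c, hc⟩ := key (i-1) (le_trans (Nat.sub_le i 1) hik)
        rw [hc ρ', hc ρ, hqq, heq]
    have hrec := ih _ _ hrlt hri hdisj'
    rw [gFun_succ', gFun_succ', hqq]
    exact add_lt_add_right hrec _

end G
section Sep
variable {α : Type u} [PartialOrder α] {P : Set α}

theorem block_iff (hWF : IsWFTree P) {u : α} (hu : u ∈ P) {β δ : Ordinal.{u}} (hβ : β ≠ 0) :
    u ∈ derivIter P (β * δ) \ derivIter P (β * (δ + 1)) ↔ treeTau P u / β = δ := by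
  constructor
  · rintro ⟨h1, h2⟩
    have hle : β * δ ≤ treeTau P u := (mem_derivIter_iff_le_treeTau hWF hu).mp h1
    have hlt : treeTau P u < β * (δ + 1) := by
      by_contra h
      exact h2 ((mem_derivIter_iff_le_treeTau hWF hu).mpr (le_of_not_gt h))
    exact ord_div_eq hβ hle hlt
  · rintro rfl
    constructor
    · exact (mem_derivIter_iff_le_treeTau hWF hu).mpr (Ordinal.mul_div_le _ _)
    · intro h
      have := (mem_derivIter_iff_le_treeTau hWF hu).mp h
      rw [Ordinal.add_one_eq_succ] at this
      exact absurd this (not_le.mpr (Ordinal.lt_mul_succ_div _ hβ))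

theorem sep_spec (hWF : IsWFTree P) {ε : ℕ → Ordinal.{u}} {l : ℕ}
    (hrank : treeRank P = alpProd ε l) {s t : α} (hs : s ∈ P) (ht : t ∈ P) :
    sep P ε s t ≤ l ∧
    treeTau P s / alpProd ε (sep P ε s t) = treeTau P t / alpProd ε (sep P ε s t) ∧
    (sep P ε s t = 0 ∨ treeTau P s / alpProd ε (sep P ε s t - 1) ≠
      treeTau P t / alpProd ε (sep P ε s t - 1)) := by
  set S : Set ℕ := {i : ℕ | ∃ δ : Ordinal.{u},
    s ∈ derivIter P (alpProd ε i * δ) \ derivIter P (alpProd ε i * (δ + 1)) ∧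
    t ∈ derivIter P (alpProd ε i * δ) \ derivIter P (alpProd ε i * (δ + 1))} with hS
  have hSiff : ∀ i : ℕ, i ∈ S ↔ treeTau P s / alpProd ε i = treeTau P t / alpProd ε i := by
    intro i
    constructor
    · rintro ⟨δ, h1, h2⟩
      rw [(block_iff hWF hs (alpProd_ne_zero ε i)).mp h1,
        (block_iff hWF ht (alpProd_ne_zero ε i)).mp h2]
    · intro h
      exact ⟨treeTau P s / alpProd ε i,
        (block_iff hWF hs (alpProd_ne_zero ε i)).mpr rfl,
        (block_iff hWF ht (alpProd_ne_zero ε i)).mpr h.symm⟩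
  have hl : l ∈ S := by
    rw [hSiff]
    rw [Ordinal.div_eq_zero_of_lt (hrank ▸ treeTau_lt_treeRank hWF hs),
      Ordinal.div_eq_zero_of_lt (hrank ▸ treeTau_lt_treeRank hWF ht)]
  have hsepS : sep P ε s t ∈ S := Nat.sInf_mem ⟨l, hl⟩
  refine ⟨Nat.sInf_le hl, (hSiff _).mp hsepS, ?_⟩
  rcases Nat.eq_zero_or_pos (sep P ε s t) with h0 | h0
  · exact Or.inl h0
  · refine Or.inr fun heq => ?_
    have : sep P ε s t - 1 ∉ S := Nat.notMem_of_lt_sInf (Nat.sub_lt h0 one_pos)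
    exact this ((hSiff _).mpr heq)

end Sep


/-- sparseness: if `P` has additively indecomposable rank, `Q` is
a subtree all of whose pairs have separation in `A ⊆ λ(rank P)`, then
`rank(Q) ≤ 1` when `rank(P) = 1`, and `rank(Q) ≤ ω^{ω^{ε_0}·1_A(0)}⋯ω^{ω^{ε_l}·1_A(l)}`
when `rank(P) = ω^{ω^{ε_0}}⋯ω^{ω^{ε_l}}`. -/
theorem statement18 {α : Type u} [PartialOrder α] (P : Set α) (hP : IsTree P)
    (hWF : IsWFTree P) (Q : Set α) (hQP : Q ⊆ P) :
    (treeRank P = 1 → treeRank Q ≤ 1) ∧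
    (∀ (l : ℕ) (ε : ℕ → Ordinal.{u}), (∀ i < l, ε (i + 1) ≤ ε i) →
      ∀ A : Set ℕ, (∀ i ∈ A, i ≤ l) →
        treeRank P = alpProd ε l →
        (∀ s ∈ Q, ∀ t ∈ Q, s < t → sep P ε s t ∈ A) →
        treeRank Q ≤ indProd ε A l) := by
  have hQempty : derivIter Q (treeRank P) = ∅ := by
    have h := derivIter_mono hQP (treeRank P)
    rw [derivIter_treeRank hWF] at h
    exact subset_empty_iff.mp h
  have hQWF : IsWFTree Q := ⟨treeRank P, hQempty⟩
  constructor
  · intro h1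
    have h2 : treeRank Q ≤ treeRank P := csInf_le' hQempty
    exact h1 ▸ h2
  · intro l ε _hmono A hAl hrank hsep
    have main : ∀ μ : Ordinal.{u}, ∀ t ∈ Q, treeTau P t = μ →
        treeTau Q t ≤ gFun ε A l μ := by
      intro μ
      induction μ using Ordinal.induction with
      | h μ IH =>
        intro t htQ htau
        refine csSup_le ⟨0, by rw [mem_setOf_eq, derivIter_zero]; exact htQ⟩ ?_
        intro ξ hξ
        by_contra hcon
        push_neg at hcon
        have h1 : t ∈ derivIter Q (gFun ε A l μ + 1) :=
          derivIter_anti Q (Order.add_one_le_iff.mpr hcon) hξ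
        rw [derivIter_succ, mem_treeDeriv_iff] at h1
        obtain ⟨_, sx, hsg, hts⟩ := h1
        have hsQ : sx ∈ Q := derivIter_subset Q _ hsg
        have hsP : sx ∈ P := hQP hsQ
        have htP : t ∈ P := hQP htQ
        have hτlt : treeTau P sx < treeTau P t := treeTau_lt_of_lt hWF htP hsP hts
        have hτs : treeTau P sx < μ := htau ▸ hτlt
        have hiA : sep P ε t sx ∈ A := hsep t htQ sx hsQ hts
        obtain ⟨hsl, hq, hdisj⟩ := sep_spec hWF hrank htP hsP
        have hdisj' : sep P ε t sx = 0 ∨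
            treeTau P sx / alpProd ε (sep P ε t sx - 1) ≠
            treeTau P t / alpProd ε (sep P ε t sx - 1) := by
          rcases hdisj with h | h
          · exact Or.inl h
          · exact Or.inr (fun he => h he.symm)
        have hstrict : gFun ε A l (treeTau P sx) < gFun ε A l (treeTau P t) :=
          gStrict hiA l hsl _ _ hτlt hq.symm hdisj'
        have hle : gFun ε A l μ ≤ treeTau Q sx := le_csSup (tauSet_bddAbove hQWF sx) hsg
        have hIH : treeTau Q sx ≤ gFun ε A l (treeTau P sx) := IH _ hτs sx hsQ rfl
        rw [htau] at hstrict
        exact absurd ((hle.trans hIH).trans_lt hstrict) (lt_irrefl _)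
    have hfinal : derivIter Q (indProd ε A l) = ∅ := by
      rw [eq_empty_iff_forall_notMem]
      intro t ht
      have htQ : t ∈ Q := derivIter_subset Q _ ht
      have h1 : indProd ε A l ≤ treeTau Q t := le_csSup (tauSet_bddAbove hQWF t) ht
      have h2 : treeTau Q t ≤ gFun ε A l (treeTau P t) := main _ t htQ rfl
      have h3 : gFun ε A l (treeTau P t) < indProd ε A l :=
        gBound l _ (hrank ▸ treeTau_lt_treeRank hWF (hQP htQ))
      exact absurd ((h1.trans h2).trans_lt h3) (lt_irrefl _)
    exact csInf_le' hfinal
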